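/- Under Assumptions 1 and 2, let η ∈ [0,1) and suppose k ∈ ℕ with k ≥ 1 is such that A^k = η · I_n (the k-th matrix power of A is η times the identity). Then α* = (1−η) · ᾱ_k, where ᾱ_k := sup{α > 0 | α • R_k^1 ⊆ 𝒳}. -/

import Mathlib

open Matrix Set Pointwise

namespace RPIScaling

/-- A C-set in `ℝ^p`: convex, compact, containing the origin in its interior. -/
def IsCSet {p : ℕ} (S : Set (Fin p → ℝ)) : Prop :=
  Convex ℝ S ∧ IsCompact S ∧ (0 : Fin p → ℝ) ∈ interior S

/-- Pontryagin difference `U ⊖ V`. -/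
def pontryaginDiff {p : ℕ} (U V : Set (Fin p → ℝ)) : Set (Fin p → ℝ) :=
  {x | ∀ v ∈ V, x + v ∈ U}

/-- Upper-left `r × r` block of `A`. -/
def blockA11 {n r : ℕ} (hrn : r ≤ n) (A : Matrix (Fin n) (Fin n) ℝ) :
    Matrix (Fin r) (Fin r) ℝ :=
  A.submatrix (Fin.castLE hrn) (Fin.castLE hrn)

/-- Upper `r × m` block of `E`. -/
def blockE1 {n m r : ℕ} (hrn : r ≤ n) (E : Matrix (Fin n) (Fin m) ℝ) :
    Matrix (Fin r) (Fin m) ℝ :=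
  E.submatrix (Fin.castLE hrn) id

/-- Lower-right `(n-r) × (n-r)` block of `A`. -/
def blockA22 {n : ℕ} (r : ℕ) (A : Matrix (Fin n) (Fin n) ℝ) :
    Matrix (Fin (n - r)) (Fin (n - r)) ℝ :=
  A.submatrix (fun i => ⟨r + i.1, by have h := i.2; omega⟩)
    (fun i => ⟨r + i.1, by have h := i.2; omega⟩)

/-- The controllability matrix `[E₁, A₁₁E₁, …, A₁₁^{r-1}E₁]` of the pair `(A₁₁, E₁)`. -/
def controllabilityMatrix {n m r : ℕ} (hrn : r ≤ n) (A : Matrix (Fin n) (Fin n) ℝ)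
    (E : Matrix (Fin n) (Fin m) ℝ) : Matrix (Fin r) (Fin r × Fin m) ℝ :=
  Matrix.of fun i p => ((blockA11 hrn A) ^ (p.1 : ℕ) * blockE1 hrn E) i p.2

/-- Assumption 1: block structure of `A` and `E`, controllability of `(A₁₁, E₁)`,
and `𝒳`, `𝒟*` are C-sets. -/
structure Assumption1 {n m r : ℕ} (hrn : r ≤ n) (A : Matrix (Fin n) (Fin n) ℝ)
    (E : Matrix (Fin n) (Fin m) ℝ) (X : Set (Fin n → ℝ)) (D : Set (Fin m → ℝ)) : Prop where
  hn : 0 < n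
  hm : 0 < m
  hr : 0 < r
  lowerLeftA : ∀ i j : Fin n, r ≤ (i : ℕ) → (j : ℕ) < r → A i j = 0
  lowerE : ∀ i : Fin n, r ≤ (i : ℕ) → ∀ j, E i j = 0
  controllable : (controllabilityMatrix hrn A E).rank = r
  hX : IsCSet X
  hD : IsCSet D

/-- All complex eigenvalues of `M` have modulus `< 1`. -/
def StrictlyStable {p : ℕ} (M : Matrix (Fin p) (Fin p) ℝ) : Prop :=
  ∀ μ ∈ spectrum ℂ (M.map (algebraMap ℝ ℂ)), ‖μ‖ < 1

/-- All complex eigenvalues of `M` have modulus `≤ 1`. -/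
def Stable {p : ℕ} (M : Matrix (Fin p) (Fin p) ℝ) : Prop :=
  ∀ μ ∈ spectrum ℂ (M.map (algebraMap ℝ ℂ)), ‖μ‖ ≤ 1

/-- Assumption 2: the eigenvalues of `A₁₁` and `A₂₂` are strictly stable. -/
def Assumption2 {n r : ℕ} (hrn : r ≤ n) (A : Matrix (Fin n) (Fin n) ℝ) : Prop :=
  StrictlyStable (blockA11 hrn A) ∧ StrictlyStable (blockA22 r A)

/-- Assumption 2': the eigenvalues of `A₂₂` are stable. -/
def Assumption2' {n : ℕ} (r : ℕ) (A : Matrix (Fin n) (Fin n) ℝ) : Prop :=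
  Stable (blockA22 r A)

/-- `P` is robust positively invariant for disturbance scaling `α`. -/
def IsRPI {n m : ℕ} (A : Matrix (Fin n) (Fin n) ℝ) (E : Matrix (Fin n) (Fin m) ℝ)
    (X : Set (Fin n → ℝ)) (D : Set (Fin m → ℝ)) (α : ℝ) (P : Set (Fin n → ℝ)) : Prop :=
  P ⊆ X ∧ ∀ x ∈ P, ∀ d ∈ α • D, A.mulVec x + E.mulVec d ∈ P

/-- The maximal RPI set: the union of all RPI sets. -/
def Pmax {n m : ℕ} (A : Matrix (Fin n) (Fin n) ℝ) (E : Matrix (Fin n) (Fin m) ℝ)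
    (X : Set (Fin n → ℝ)) (D : Set (Fin m → ℝ)) (α : ℝ) : Set (Fin n → ℝ) :=
  ⋃₀ {P | IsRPI A E X D α P}

/-- The minimal RPI set: the intersection of all nonempty RPI sets together with the MRPI set. -/
def Pmin {n m : ℕ} (A : Matrix (Fin n) (Fin n) ℝ) (E : Matrix (Fin n) (Fin m) ℝ)
    (X : Set (Fin n → ℝ)) (D : Set (Fin m → ℝ)) (α : ℝ) : Set (Fin n → ℝ) :=
  ⋂₀ ({P | IsRPI A E X D α P ∧ P.Nonempty} ∪ {Pmax A E X D α})

/-- The sequence `S_k^α`. -/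
def Sseq {n m : ℕ} (A : Matrix (Fin n) (Fin n) ℝ) (E : Matrix (Fin n) (Fin m) ℝ)
    (X : Set (Fin n → ℝ)) (D : Set (Fin m → ℝ)) (α : ℝ) : ℕ → Set (Fin n → ℝ)
  | 0 => X
  | k + 1 => A.mulVec ⁻¹' (pontryaginDiff (Sseq A E X D α k) (E.mulVec '' (α • D))) ∩ X

/-- The limit set `S_∞^α`. -/
def Sinf {n m : ℕ} (A : Matrix (Fin n) (Fin n) ℝ) (E : Matrix (Fin n) (Fin m) ℝ)
    (X : Set (Fin n → ℝ)) (D : Set (Fin m → ℝ)) (α : ℝ) : Set (Fin n → ℝ) :=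
  ⋂ k : ℕ, Sseq A E X D α k

/-- The sequence `R_k^α` of reachable sets. -/
def Rseq {n m : ℕ} (A : Matrix (Fin n) (Fin n) ℝ) (E : Matrix (Fin n) (Fin m) ℝ)
    (D : Set (Fin m → ℝ)) (α : ℝ) : ℕ → Set (Fin n → ℝ)
  | 0 => {0}
  | k + 1 => A.mulVec '' (Rseq A E D α k) + E.mulVec '' (α • D)

/-- The limit set `R_∞^α`. -/
def Rinf {n m : ℕ} (A : Matrix (Fin n) (Fin n) ℝ) (E : Matrix (Fin n) (Fin m) ℝ)
    (D : Set (Fin m → ℝ)) (α : ℝ) : Set (Fin n → ℝ) :=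
  ⋃ k : ℕ, Rseq A E D α k

/-- The critical scaling factor `α*`. -/
noncomputable def alphaStar {n m : ℕ} (A : Matrix (Fin n) (Fin n) ℝ)
    (E : Matrix (Fin n) (Fin m) ℝ) (X : Set (Fin n → ℝ)) (D : Set (Fin m → ℝ)) : ℝ :=
  sSup {α : ℝ | 0 < α ∧ Rinf A E D α ⊆ X}

/-- The sequence `Q_k^α` used to characterize the maximal controlled invariant set. -/
def Qseq {n m : ℕ} (A : Matrix (Fin n) (Fin n) ℝ) (E : Matrix (Fin n) (Fin m) ℝ)
    (X : Set (Fin n → ℝ)) (D : Set (Fin m → ℝ)) (α : ℝ) : ℕ → Set (Fin n → ℝ)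
  | 0 => X
  | k + 1 => A.mulVec ⁻¹' (Qseq A E X D α k + -(E.mulVec '' (α • D))) ∩ X

/-- `C` is controlled invariant for input-constraint scaling `α`. -/
def IsCI {n m : ℕ} (A : Matrix (Fin n) (Fin n) ℝ) (E : Matrix (Fin n) (Fin m) ℝ)
    (X : Set (Fin n → ℝ)) (D : Set (Fin m → ℝ)) (α : ℝ) (C : Set (Fin n → ℝ)) : Prop :=
  C ⊆ X ∧ ∀ x ∈ C, ∃ d ∈ α • D, A.mulVec x + E.mulVec d ∈ C

/-- The maximal controlled invariant set: the union of all CI sets. -/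
def Cmax {n m : ℕ} (A : Matrix (Fin n) (Fin n) ℝ) (E : Matrix (Fin n) (Fin m) ℝ)
    (X : Set (Fin n → ℝ)) (D : Set (Fin m → ℝ)) (α : ℝ) : Set (Fin n → ℝ) :=
  ⋃₀ {C | IsCI A E X D α C}

/-- The Minkowski sum `W = ⨁_{k=0}^{M-1} A₁₁^k E₁ 𝒟*`. -/
def Wset {n m r : ℕ} (hrn : r ≤ n) (A : Matrix (Fin n) (Fin n) ℝ)
    (E : Matrix (Fin n) (Fin m) ℝ) (D : Set (Fin m → ℝ)) (M : ℕ) : Set (Fin r → ℝ) :=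
  {w | ∃ d : Fin M → Fin m → ℝ, (∀ i, d i ∈ D) ∧
    w = ∑ i : Fin M, ((blockA11 hrn A) ^ (i : ℕ) * blockE1 hrn E).mulVec (d i)}


section Aux

variable {n m : ℕ} (A : Matrix (Fin n) (Fin n) ℝ) (E : Matrix (Fin n) (Fin m) ℝ)
  (D : Set (Fin m → ℝ))

lemma smul_set_add'' {p : ℕ} (c : ℝ) (S T : Set (Fin p → ℝ)) : c • (S + T) = c • S + c • T := by
  have h := Set.image_add (DistribMulAction.toAddMonoidHom (Fin p → ℝ) c) (s := S) (t := T)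
  simpa using h

lemma mulVec_image_add {p q : ℕ} (M : Matrix (Fin q) (Fin p) ℝ) (S T : Set (Fin p → ℝ)) :
    M.mulVec '' (S + T) = M.mulVec '' S + M.mulVec '' T :=
  Set.image_add M.mulVecLin

lemma mulVec_image_smul {p q : ℕ} (M : Matrix (Fin q) (Fin p) ℝ) (c : ℝ) (S : Set (Fin p → ℝ)) :
    M.mulVec '' (c • S) = c • (M.mulVec '' S) :=
  image_smul_set M.mulVecLin c S

lemma Rseq_smul (α : ℝ) (j : ℕ) : Rseq A E D α j = α • Rseq A E D 1 j := by
  induction j with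
  | zero => simp [Rseq, Set.smul_set_singleton]
  | succ j ih =>
    have h2 : E.mulVec '' (α • D) = α • (E.mulVec '' ((1:ℝ) • D)) := by
      rw [one_smul]; exact mulVec_image_smul E α D
    rw [Rseq, Rseq, ih, mulVec_image_smul, h2, ← smul_set_add'']

lemma zero_mem_Rseq (hD : (0 : Fin m → ℝ) ∈ D) (α : ℝ) (j : ℕ) :
    (0 : Fin n → ℝ) ∈ Rseq A E D α j := by
  induction j with
  | zero => simp [Rseq]
  | succ j ih =>
    have h0 : (0 : Fin m → ℝ) ∈ α • D := ⟨0, hD, smul_zero α⟩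
    have := Set.add_mem_add (Set.mem_image_of_mem A.mulVec ih)
      (Set.mem_image_of_mem E.mulVec h0)
    simpa [Rseq, Matrix.mulVec_zero] using this

lemma Rseq_subset_succ (hD : (0 : Fin m → ℝ) ∈ D) (α : ℝ) (j : ℕ) :
    Rseq A E D α j ⊆ Rseq A E D α (j + 1) := by
  induction j with
  | zero =>
    intro x hx
    simp only [Rseq, Set.mem_singleton_iff] at hx
    subst hx
    exact zero_mem_Rseq A E D hD α 1
  | succ j ih =>
    show Rseq A E D α (j+1) ⊆ Rseq A E D α (j+2)
    rw [Rseq, Rseq]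
    exact Set.add_subset_add (Set.image_mono ih) subset_rfl

lemma Rseq_mono (hD : (0 : Fin m → ℝ) ∈ D) (α : ℝ) {i j : ℕ} (hij : i ≤ j) :
    Rseq A E D α i ⊆ Rseq A E D α j := by
  induction j, hij using Nat.le_induction with
  | base => exact subset_rfl
  | succ j hij ih => exact ih.trans (Rseq_subset_succ A E D hD α j)

lemma Rseq_add (α : ℝ) (a b : ℕ) :
    Rseq A E D α (a + b) = (A ^ b).mulVec '' Rseq A E D α a + Rseq A E D α b := by
  induction b with
  | zero =>
    simp [Rseq, pow_zero, Matrix.one_mulVec, Set.image_id']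
  | succ b ih =>
    show Rseq A E D α (a + b + 1) = _
    rw [Rseq, ih, mulVec_image_add, ← Set.image_comp]
    have hc : A.mulVec ∘ (A ^ b).mulVec = (A ^ (b+1)).mulVec := by
      funext x; simp [Function.comp, Matrix.mulVec_mulVec, pow_succ']
    rw [hc]
    show _ = (A^(b+1)).mulVec '' _ + Rseq A E D α (b+1)
    rw [Rseq, add_assoc]

lemma Rseq_convex (hD : Convex ℝ D) (α : ℝ) (j : ℕ) : Convex ℝ (Rseq A E D α j) := by
  induction j with
  | zero => exact convex_singleton 0
  | succ j ih =>
    exact Convex.add (ih.linear_image A.mulVecLin) ((hD.smul α).linear_image E.mulVecLin)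

lemma Rseq_compact (hD : IsCompact D) (j : ℕ) : IsCompact (Rseq A E D 1 j) := by
  induction j with
  | zero => exact isCompact_singleton
  | succ j ih =>
    rw [Rseq, one_smul]
    exact IsCompact.add (ih.image A.mulVecLin.continuous_of_finiteDimensional)
      (hD.image E.mulVecLin.continuous_of_finiteDimensional)

lemma Rseq_mul_k (hD0 : (0 : Fin m → ℝ) ∈ D) (hDc : Convex ℝ D) {η : ℝ} (hη0 : 0 ≤ η)
    {k : ℕ} (hAk : A ^ k = η • (1 : Matrix (Fin n) (Fin n) ℝ)) {α : ℝ} (hα : 0 ≤ α) (t : ℕ) :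
    Rseq A E D α (t * k) = (α * ∑ j ∈ Finset.range t, η ^ j) • Rseq A E D 1 k := by
  induction t with
  | zero =>
    rw [Nat.zero_mul]
    simp only [Finset.range_zero, Finset.sum_empty, mul_zero]
    rw [Set.zero_smul_set ⟨0, zero_mem_Rseq A E D hD0 1 k⟩]
    rfl
  | succ t ih =>
    have hst : (0:ℝ) ≤ ∑ j ∈ Finset.range t, η ^ j :=
      Finset.sum_nonneg fun _ _ => pow_nonneg hη0 _
    have him : ((η • (1 : Matrix (Fin n) (Fin n) ℝ)).mulVec) = fun x : Fin n → ℝ => η • x := by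
      funext x
      rw [Matrix.smul_mulVec, Matrix.one_mulVec]
    have hco : α * ∑ j ∈ Finset.range (t+1), η ^ j
        = η * (α * ∑ j ∈ Finset.range t, η ^ j) + α := by
      rw [geom_sum_succ]; ring
    have hconv := Rseq_convex A E D hDc 1 k
    rw [show (t+1) * k = t * k + k from by ring, Rseq_add, ih, hAk, him, hco,
      Convex.add_smul hconv (by positivity) hα, Set.image_smul, smul_smul,
      Rseq_smul A E D α k]

end Aux

theorem alphaStar_exact_of_pow_eq_smul_one {n m r : ℕ} (hrn : r ≤ n)
    (A : Matrix (Fin n) (Fin n) ℝ) (E : Matrix (Fin n) (Fin m) ℝ)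
    (X : Set (Fin n → ℝ)) (D : Set (Fin m → ℝ))
    (hA1 : Assumption1 hrn A E X D) (hA2 : Assumption2 hrn A)
    (η : ℝ) (hη0 : 0 ≤ η) (hη1 : η < 1) (k : ℕ) (hk : 1 ≤ k)
    (hAk : A ^ k = η • (1 : Matrix (Fin n) (Fin n) ℝ)) :
    alphaStar A E X D = (1 - η) * sSup {α : ℝ | 0 < α ∧ α • Rseq A E D 1 k ⊆ X} := by
  obtain ⟨hXconv, hXcomp, hX0i⟩ := hA1.hX
  obtain ⟨hDconv, hDcomp, hD0i⟩ := hA1.hD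
  have hX0 : (0 : Fin n → ℝ) ∈ X := interior_subset hX0i
  have hD0 : (0 : Fin m → ℝ) ∈ D := interior_subset hD0i
  have hXclosed : IsClosed X := hXcomp.isClosed
  set R : Set (Fin n → ℝ) := Rseq A E D 1 k with hR
  have hRconv : Convex ℝ R := Rseq_convex A E D hDconv 1 k
  have hRcomp : IsCompact R := Rseq_compact A E D hDcomp k
  have hR0 : (0 : Fin n → ℝ) ∈ R := zero_mem_Rseq A E D hD0 1 k
  have h1η : (0:ℝ) < 1 - η := by linarith
  set Sb : Set ℝ := {α : ℝ | 0 < α ∧ α • R ⊆ X} with hSb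
  -- Sb is nonempty
  obtain ⟨C, hC⟩ := hRcomp.isBounded.exists_norm_le
  have hC1 : (0:ℝ) < C + 1 := by
    have := le_trans (norm_nonneg (0 : Fin n → ℝ)) (hC 0 hR0); linarith
  obtain ⟨ε, hε, hball⟩ := Metric.mem_nhds_iff.mp (mem_interior_iff_mem_nhds.mp hX0i)
  have hSbne : Sb.Nonempty := by
    refine ⟨ε / (2 * (C + 1)), div_pos hε (by linarith), ?_⟩
    rintro _ ⟨x, hx, rfl⟩
    apply hball
    rw [Metric.mem_ball, dist_zero_right, norm_smul, Real.norm_eq_abs,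
      abs_of_pos (div_pos hε (by linarith))]
    calc ε / (2 * (C + 1)) * ‖x‖ ≤ ε / (2 * (C + 1)) * (C + 1) := by
          refine mul_le_mul_of_nonneg_left ?_ (le_of_lt (div_pos hε (by linarith)))
          exact le_trans (hC x hx) (by linarith)
      _ = ε / 2 := by field_simp
      _ < ε := by linarith
  -- a nonzero element of R
  have hE1 : ∃ (i : Fin r) (j : Fin m), blockE1 hrn E i j ≠ 0 := by
    by_contra h
    push_neg at h
    have hE10 : blockE1 hrn E = 0 := by ext i j; exact h i j
    have hcz : controllabilityMatrix hrn A E = 0 := by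
      ext i p
      simp [controllabilityMatrix, hE10, Matrix.mul_zero]
    have hrk := hA1.controllable
    rw [hcz, Matrix.rank_zero] at hrk
    have hrpos := hA1.hr
    omega
  obtain ⟨i0, j0, hij0⟩ := hE1
  obtain ⟨ε', hε', hball'⟩ := Metric.mem_nhds_iff.mp (mem_interior_iff_mem_nhds.mp hD0i)
  set d : Fin m → ℝ := Pi.single j0 (ε'/2) with hd
  have hdD : d ∈ D := by
    apply hball'
    rw [Metric.mem_ball, dist_zero_right]
    have : ‖d‖ ≤ ε'/2 := by
      apply pi_norm_le_iff_of_nonneg (by linarith) |>.mpr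
      intro i
      rw [hd, Real.norm_eq_abs, Pi.single_apply]
      split
      · rw [abs_of_nonneg (by linarith)]
      · rw [abs_zero]; positivity
    linarith
  set v : Fin n → ℝ := E.mulVec d with hv
  have hvne : v ≠ 0 := by
    intro hv0
    have h1 : v (Fin.castLE hrn i0) = E (Fin.castLE hrn i0) j0 * (ε'/2) := by
      rw [hv, hd, Matrix.mulVec_single]; rfl
    rw [hv0] at h1
    have : E (Fin.castLE hrn i0) j0 = 0 := by
      have h2 : E (Fin.castLE hrn i0) j0 * (ε'/2) = 0 := h1.symm
      rcases mul_eq_zero.mp h2 with h | h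
      · exact h
      · linarith
    exact hij0 this
  have hvR : v ∈ R := by
    have hv1 : v ∈ Rseq A E D 1 1 := by
      have hdD1 : d ∈ (1:ℝ) • D := by rw [one_smul]; exact hdD
      have := Set.add_mem_add
        (Set.mem_image_of_mem A.mulVec (show (0:Fin n → ℝ) ∈ ({0} : Set _) from rfl))
        (Set.mem_image_of_mem E.mulVec hdD1)
      simpa [Rseq, Matrix.mulVec_zero] using this
    exact Rseq_mono A E D hD0 1 hk hv1
  have hvpos : (0:ℝ) < ‖v‖ := norm_pos_iff.mpr hvne
  obtain ⟨Cx, hCx⟩ := hXcomp.isBounded.exists_norm_le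
  -- Sb bounded above
  have hSbbd : BddAbove Sb := by
    refine ⟨Cx / ‖v‖, fun α hα => ?_⟩
    obtain ⟨hαpos, hαR⟩ := hα
    have : α • v ∈ X := hαR (Set.smul_mem_smul_set hvR)
    have hn := hCx _ this
    rw [norm_smul, Real.norm_eq_abs, abs_of_pos hαpos] at hn
    rw [le_div_iff₀ hvpos]
    exact hn
  set abar : ℝ := sSup Sb with habar
  have habarpos : 0 < abar := lt_of_lt_of_le hSbne.choose_spec.1 (le_csSup hSbbd hSbne.choose_spec)
  -- abar • R ⊆ X
  have habarR : abar • R ⊆ X := by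
    rintro _ ⟨x, hx, rfl⟩
    have hTclosed : IsClosed {β : ℝ | β • x ∈ X} :=
      hXclosed.preimage (continuous_id.smul continuous_const)
    have hST : Sb ⊆ {β : ℝ | β • x ∈ X} := fun β hβ => hβ.2 (Set.smul_mem_smul_set hx)
    have := csSup_mem_closure hSbne hSbbd
    exact hTclosed.closure_subset ((closure_mono hST) this)
  -- downward closedness
  have hdown : ∀ β γ : ℝ, 0 ≤ β → β ≤ γ → γ • R ⊆ X → β • R ⊆ X := by
    intro β γ hβ hβγ hγ
    rintro _ ⟨x, hx, rfl⟩
    rcases eq_or_lt_of_le (hβ.trans hβγ) with h | hγpos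
    · have hβ0 : β = 0 := le_antisymm (hβγ.trans h.symm.le) hβ
      subst hβ0
      simpa using hX0
    · have hγx : γ • x ∈ X := hγ (Set.smul_mem_smul_set hx)
      have : (β / γ) • (γ • x) ∈ X :=
        hXconv.smul_mem_of_zero_mem hX0 hγx
          ⟨div_nonneg hβ hγpos.le, (div_le_one hγpos).mpr hβγ⟩
      rwa [smul_smul, div_mul_cancel₀ _ (ne_of_gt hγpos)] at this
  -- geometric sums
  set s : ℕ → ℝ := fun t => ∑ j ∈ Finset.range t, η ^ j with hs
  have hsnn : ∀ t, 0 ≤ s t := fun t => Finset.sum_nonneg fun _ _ => pow_nonneg hη0 _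
  have hsle : ∀ t, (1 - η) * s t ≤ 1 := by
    intro t
    have hne : η ≠ 1 := ne_of_lt hη1
    have hne1 : η - 1 ≠ 0 := by linarith
    have : (1 - η) * s t = 1 - η ^ t := by
      rw [hs]
      simp only []
      rw [geom_sum_eq hne, mul_comm, div_mul_eq_mul_div, div_eq_iff hne1]
      ring
    rw [this]
    have := pow_nonneg hη0 t
    linarith
  have hstend : Filter.Tendsto s Filter.atTop (nhds (1 - η)⁻¹) :=
    (hasSum_geometric_of_lt_one hη0 hη1).tendsto_sum_nat
  -- characterization of Rinf ⊆ X
  have hchar : ∀ α : ℝ, 0 < α → (Rinf A E D α ⊆ X ↔ ∀ t : ℕ, (α * s t) • R ⊆ X) := by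
    intro α hαpos
    constructor
    · intro h t
      rw [← Rseq_mul_k A E D hD0 hDconv hη0 hAk hαpos.le t]
      intro x hx
      exact h (Set.mem_iUnion.mpr ⟨t * k, hx⟩)
    · intro h
      rw [Rinf, Set.iUnion_subset_iff]
      intro j
      have hjk : j ≤ j * k := Nat.le_mul_of_pos_right j (by omega)
      refine (Rseq_mono A E D hD0 α hjk).trans ?_
      rw [Rseq_mul_k A E D hD0 hDconv hη0 hAk hαpos.le j]
      exact h j
  -- Sa facts
  set Sa : Set ℝ := {α : ℝ | 0 < α ∧ Rinf A E D α ⊆ X} with hSa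
  have hSaub : ∀ α ∈ Sa, α ≤ (1 - η) * abar := by
    intro α hα
    obtain ⟨hαpos, hαX⟩ := hα
    have hall := (hchar α hαpos).mp hαX
    have hdivR : (α / (1 - η)) • R ⊆ X := by
      rintro _ ⟨x, hx, rfl⟩
      have htendx : Filter.Tendsto (fun t => (α * s t) • x) Filter.atTop
          (nhds ((α * (1 - η)⁻¹) • x)) := by
        exact ((hstend.const_mul α).smul_const x)
      have hmem : ∀ t, (α * s t) • x ∈ X := fun t => hall t (Set.smul_mem_smul_set hx)
      have := hXclosed.mem_of_tendsto htendx (Filter.Eventually.of_forall hmem)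
      rwa [div_eq_mul_inv]
    have hmemSb : α / (1 - η) ∈ Sb := ⟨div_pos hαpos h1η, hdivR⟩
    have := le_csSup hSbbd hmemSb
    rw [div_le_iff₀ h1η] at this
    linarith [this]
  have hSamem : (1 - η) * abar ∈ Sa := by
    refine ⟨mul_pos h1η habarpos, ?_⟩
    rw [hchar _ (mul_pos h1η habarpos)]
    intro t
    refine hdown ((1 - η) * abar * s t) abar (by positivity) ?_ habarR
    calc (1 - η) * abar * s t = abar * ((1 - η) * s t) := by ring
      _ ≤ abar * 1 := mul_le_mul_of_nonneg_left (hsle t) habarpos.le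
      _ = abar := mul_one abar
  have hgoal : sSup Sa = (1 - η) * abar := by
    apply le_antisymm
    · exact csSup_le ⟨_, hSamem⟩ hSaub
    · exact le_csSup ⟨(1 - η) * abar, hSaub⟩ hSamem
  exact hgoal

end RPIScaling
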